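/- Let X = {x_1, …, x_p} be a finite set and let S_1, …, S_m ⊆ X with |S_i| = 3 for every i. Consider the candidate set C = {s_1, …, s_m} ∪ {w_1, w_2}, where candidate s_i corresponds to the set S_i, and the 3VA partial profile consisting of: for each x ∈ X, a voter v_x with Top(v_x) = {s_i : x ∉ S_i}, Middle(v_x) = {w_1, w_2}, and Bottom(v_x) = {s_i : x ∈ S_i}; together with six voters with empty Middle: three voters with Top = {s_1, …, s_m}, two voters with Top = {w_1}, and one voter with Top = {w_2}. Then {w_1, w_2} is a possible committee of size 2 under Chamberlin–Courant if and only if there exists a subset B ⊆ X such that |B ∩ S_i| = 1 for every i ∈ {1, …, m}. -/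
import Mathlib


open Finset

/-- The Chamberlin–Courant weight function: `w 0 = 0` and `w x = 1` for `x ≥ 1`. -/
def wCC : ℕ → ℚ := fun x => if x = 0 then 0 else 1

/-- The `w`-Thiele score of a set `S` under approval profile `A`. -/
def thieleScore {V C : Type*} [Fintype V] [DecidableEq C]
    (w : ℕ → ℚ) (A : V → Finset C) (S : Finset C) : ℚ :=
  ∑ v, w ((S ∩ A v).card)

/-- `W` is a winning committee of size `k` under `w`-Thiele in `A`. -/
def IsWinning {V C : Type*} [Fintype V] [DecidableEq C]
    (w : ℕ → ℚ) (k : ℕ) (A : V → Finset C) (W : Finset C) : Prop :=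
  W.card = k ∧ ∀ W' : Finset C, W'.card = k → thieleScore w A W' ≤ thieleScore w A W

/-- `A` is a completion of the 3VA partial profile given by `Top` and `Mid`:
each voter approves `Top v` together with an arbitrary subset of `Mid v`. -/
def Is3VACompletion {V C : Type*} [DecidableEq C]
    (Top Mid : V → Finset C) (A : V → Finset C) : Prop :=
  ∀ v, Top v ⊆ A v ∧ A v ⊆ Top v ∪ Mid v

/-- The `Top` sets of the reduction profile.  Candidate `Sum.inl i` is the
candidate `s i` corresponding to the set `S i`; candidates `Sum.inr 0` and
`Sum.inr 1` are `w₁` and `w₂`.  Voter `Sum.inl x` is the voter `v_x` for the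
element `x`; voters `Sum.inr j` are the six voters without uncertainty:
three approving all of `s 1, …, s m`, two approving `w₁` and one approving `w₂`. -/
def redTop {X : Type*} [Fintype X] [DecidableEq X] {m : ℕ} (S : Fin m → Finset X) :
    X ⊕ Fin 6 → Finset (Fin m ⊕ Fin 2)
  | Sum.inl x => (Finset.univ.filter (fun i => x ∉ S i)).image Sum.inl
  | Sum.inr j =>
      if j.val < 3 then Finset.univ.image (Sum.inl : Fin m → Fin m ⊕ Fin 2)
      else if j.val < 5 then {Sum.inr 0}
      else {Sum.inr 1}

/-- The `Middle` sets of the reduction profile: voter `v_x` is undecided about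
`w₁` and `w₂`, the six remaining voters have no uncertainty. -/
def redMid {X : Type*} {m : ℕ} : X ⊕ Fin 6 → Finset (Fin m ⊕ Fin 2)
  | Sum.inl _ => {Sum.inr 0, Sum.inr 1}
  | Sum.inr _ => ∅

section Aux

variable {X : Type*} [Fintype X] [DecidableEq X] {m : ℕ}

lemma wCC_pair {C : Type*} [DecidableEq C] (T : Finset C) (a b : C) :
    wCC (({a,b} ∩ T).card) = if a ∈ T ∨ b ∈ T then 1 else 0 := by
  rw [wCC]
  by_cases h : a ∈ T ∨ b ∈ T
  · rw [if_pos h, if_neg]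
    rw [Finset.card_eq_zero, ← Ne, ← Finset.nonempty_iff_ne_empty]
    rcases h with h | h
    exacts [⟨a, by simp [h]⟩, ⟨b, by simp [h]⟩]
  · push_neg at h
    have he : ({a,b} : Finset C) ∩ T = ∅ := by
      ext c; simp only [Finset.mem_inter, Finset.mem_insert, Finset.mem_singleton,
        Finset.notMem_empty, iff_false, not_and]
      rintro (rfl | rfl) <;> tauto
    rw [he]
    simp [h.1, h.2]

lemma score_pair (A : X ⊕ Fin 6 → Finset (Fin m ⊕ Fin 2)) (a b : Fin m ⊕ Fin 2) :
    thieleScore wCC A {a,b} =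
      ((Finset.univ.filter fun x : X => a ∈ A (Sum.inl x) ∨ b ∈ A (Sum.inl x)).card : ℚ)
        + ∑ j : Fin 6, (if a ∈ A (Sum.inr j) ∨ b ∈ A (Sum.inr j) then (1:ℚ) else 0) := by
  rw [thieleScore, Fintype.sum_sum_type]
  congr 1
  · rw [← Finset.sum_boole]
    exact Finset.sum_congr rfl fun x _ => wCC_pair _ a b
  · exact Finset.sum_congr rfl fun j _ => wCC_pair _ a b

lemma comp_fix {S : Fin m → Finset X} {A : X ⊕ Fin 6 → Finset (Fin m ⊕ Fin 2)}
    (hA : Is3VACompletion (redTop S) redMid A) (j : Fin 6) :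
    A (Sum.inr j) = redTop S (Sum.inr j) := by
  refine subset_antisymm ?_ (hA (Sum.inr j)).1
  have := (hA (Sum.inr j)).2
  simpa [redMid] using this

lemma comp_inl_mem {S : Fin m → Finset X} {A : X ⊕ Fin 6 → Finset (Fin m ⊕ Fin 2)}
    (hA : Is3VACompletion (redTop S) redMid A) (x : X) (i : Fin m) :
    Sum.inl i ∈ A (Sum.inl x) ↔ x ∉ S i := by
  constructor
  · intro h
    have := (hA (Sum.inl x)).2 h
    simp [redTop, redMid] at this
    exact this
  · intro h
    exact (hA (Sum.inl x)).1 (by simp [redTop, h])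

lemma fix_ww {S : Fin m → Finset X} {A : X ⊕ Fin 6 → Finset (Fin m ⊕ Fin 2)}
    (hA : Is3VACompletion (redTop S) redMid A) :
    ∑ j : Fin 6, (if (Sum.inr 0 : Fin m ⊕ Fin 2) ∈ A (Sum.inr j) ∨ (Sum.inr 1 : Fin m ⊕ Fin 2) ∈ A (Sum.inr j) then (1:ℚ) else 0) = 3 := by
  simp only [comp_fix hA]
  rw [Fin.sum_univ_six]
  simp [redTop, show ((3:Fin 6):ℕ)=3 from rfl, show ((4:Fin 6):ℕ)=4 from rfl, show ((5:Fin 6):ℕ)=5 from rfl, reduceCtorEq]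
  try norm_num

lemma fix_sw0 {S : Fin m → Finset X} {A : X ⊕ Fin 6 → Finset (Fin m ⊕ Fin 2)}
    (hA : Is3VACompletion (redTop S) redMid A) (i : Fin m) :
    ∑ j : Fin 6, (if (Sum.inl i : Fin m ⊕ Fin 2) ∈ A (Sum.inr j) ∨ (Sum.inr 0 : Fin m ⊕ Fin 2) ∈ A (Sum.inr j) then (1:ℚ) else 0) = 5 := by
  simp only [comp_fix hA]
  rw [Fin.sum_univ_six]
  simp [redTop, show ((3:Fin 6):ℕ)=3 from rfl, show ((4:Fin 6):ℕ)=4 from rfl, show ((5:Fin 6):ℕ)=5 from rfl, reduceCtorEq]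
  try norm_num

lemma fix_sw1 {S : Fin m → Finset X} {A : X ⊕ Fin 6 → Finset (Fin m ⊕ Fin 2)}
    (hA : Is3VACompletion (redTop S) redMid A) (i : Fin m) :
    ∑ j : Fin 6, (if (Sum.inl i : Fin m ⊕ Fin 2) ∈ A (Sum.inr j) ∨ (Sum.inr 1 : Fin m ⊕ Fin 2) ∈ A (Sum.inr j) then (1:ℚ) else 0) = 4 := by
  simp only [comp_fix hA]
  rw [Fin.sum_univ_six]
  simp [redTop, show ((3:Fin 6):ℕ)=3 from rfl, show ((4:Fin 6):ℕ)=4 from rfl, show ((5:Fin 6):ℕ)=5 from rfl, reduceCtorEq]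
  try norm_num

lemma fix_ss {S : Fin m → Finset X} {A : X ⊕ Fin 6 → Finset (Fin m ⊕ Fin 2)}
    (hA : Is3VACompletion (redTop S) redMid A) (i i' : Fin m) :
    ∑ j : Fin 6, (if (Sum.inl i : Fin m ⊕ Fin 2) ∈ A (Sum.inr j) ∨ (Sum.inl i' : Fin m ⊕ Fin 2) ∈ A (Sum.inr j) then (1:ℚ) else 0) = 3 := by
  simp only [comp_fix hA]
  rw [Fin.sum_univ_six]
  simp [redTop, show ((3:Fin 6):ℕ)=3 from rfl, show ((4:Fin 6):ℕ)=4 from rfl, show ((5:Fin 6):ℕ)=5 from rfl, reduceCtorEq]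
  try norm_num

lemma fix_w0w0 {S : Fin m → Finset X} {A : X ⊕ Fin 6 → Finset (Fin m ⊕ Fin 2)}
    (hA : Is3VACompletion (redTop S) redMid A) :
    ∑ j : Fin 6, (if (Sum.inr 0 : Fin m ⊕ Fin 2) ∈ A (Sum.inr j) ∨ (Sum.inr 0 : Fin m ⊕ Fin 2) ∈ A (Sum.inr j) then (1:ℚ) else 0) = 2 := by
  simp only [comp_fix hA]
  rw [Fin.sum_univ_six]
  simp [redTop, show ((3:Fin 6):ℕ)=3 from rfl, show ((4:Fin 6):ℕ)=4 from rfl, show ((5:Fin 6):ℕ)=5 from rfl, reduceCtorEq]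
  try norm_num

lemma fix_w1w1 {S : Fin m → Finset X} {A : X ⊕ Fin 6 → Finset (Fin m ⊕ Fin 2)}
    (hA : Is3VACompletion (redTop S) redMid A) :
    ∑ j : Fin 6, (if (Sum.inr 1 : Fin m ⊕ Fin 2) ∈ A (Sum.inr j) ∨ (Sum.inr 1 : Fin m ⊕ Fin 2) ∈ A (Sum.inr j) then (1:ℚ) else 0) = 1 := by
  simp only [comp_fix hA]
  rw [Fin.sum_univ_six]
  simp [redTop, show ((3:Fin 6):ℕ)=3 from rfl, show ((4:Fin 6):ℕ)=4 from rfl, show ((5:Fin 6):ℕ)=5 from rfl, reduceCtorEq]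
  try norm_num

lemma fin_two (c : Fin 2) : c = 0 ∨ c = 1 := by revert c; decide

lemma card_pair_two (a b : Fin m ⊕ Fin 2) (hab : a ≠ b) :
    ({a, b} : Finset (Fin m ⊕ Fin 2)).card = 2 := by
  rw [Finset.card_insert_of_notMem (by simpa using hab), Finset.card_singleton]

end Aux

theorem stmt6 {X : Type*} [Fintype X] [DecidableEq X]
    (m : ℕ) (S : Fin m → Finset X) (hS : ∀ i, (S i).card = 3) :
    (∃ A : X ⊕ Fin 6 → Finset (Fin m ⊕ Fin 2),
        Is3VACompletion (redTop S) redMid A ∧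
        IsWinning wCC 2 A {Sum.inr 0, Sum.inr 1}) ↔
    (∃ B : Finset X, ∀ i : Fin m, (B ∩ S i).card = 1) := by
  constructor
  · rintro ⟨A, hA, hcard, hwin⟩
    set P : X → Prop := fun x => Sum.inr 0 ∈ A (Sum.inl x) with hP
    set Q : X → Prop := fun x => Sum.inr 1 ∈ A (Sum.inl x) with hQ
    refine ⟨univ.filter (fun x => ¬ Q x), fun i => ?_⟩
    set p := Fintype.card X with hp
    set n := (univ.filter fun x : X => P x ∨ Q x).card with hn
    -- score of the W committee
    have hscoreW : thieleScore wCC A {Sum.inr 0, Sum.inr 1} = (n : ℚ) + 3 := by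
      rw [score_pair, fix_ww hA]
    -- inequality from {s i, w1}
    have h1 := hwin {Sum.inl i, Sum.inr 0} (card_pair_two _ _ (by simp))
    rw [score_pair, fix_sw0 hA, hscoreW] at h1
    have h2 := hwin {Sum.inl i, Sum.inr 1} (card_pair_two _ _ (by simp))
    rw [score_pair, fix_sw1 hA, hscoreW] at h2
    set a' := (univ.filter fun x : X => Sum.inl i ∈ A (Sum.inl x) ∨ P x).card with ha'
    set b' := (univ.filter fun x : X => Sum.inl i ∈ A (Sum.inl x) ∨ Q x).card with hb'
    have h1' : a' + 5 ≤ n + 3 := by exact_mod_cast h1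
    have h2' : b' + 4 ≤ n + 3 := by exact_mod_cast h2
    -- complements
    set a := (univ.filter fun x : X => x ∈ S i ∧ ¬ P x).card with ha
    set b := (univ.filter fun x : X => x ∈ S i ∧ ¬ Q x).card with hb
    set c := (univ.filter fun x : X => x ∈ S i ∧ ¬ P x ∧ ¬ Q x).card with hc
    set d := (univ.filter fun x : X => ¬ (P x ∨ Q x)).card with hd
    have hnd : n + d = p := by
      rw [hn, hd, hp, ← Finset.card_univ]
      exact Finset.card_filter_add_card_filter_not _
    have ha'a : a' + a = p := by
      rw [ha', ha, hp, ← Finset.card_univ]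
      have : (univ.filter fun x : X => x ∈ S i ∧ ¬ P x)
          = (univ.filter fun x : X => ¬ (Sum.inl i ∈ A (Sum.inl x) ∨ P x)) := by
        apply Finset.filter_congr
        intro x _
        simp [comp_inl_mem hA, not_or]
      rw [this]
      exact Finset.card_filter_add_card_filter_not _
    have hb'b : b' + b = p := by
      rw [hb', hb, hp, ← Finset.card_univ]
      have : (univ.filter fun x : X => x ∈ S i ∧ ¬ Q x)
          = (univ.filter fun x : X => ¬ (Sum.inl i ∈ A (Sum.inl x) ∨ Q x)) := by
        apply Finset.filter_congr
        intro x _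
        simp [comp_inl_mem hA, not_or]
      rw [this]
      exact Finset.card_filter_add_card_filter_not _
    have hab : a + b ≤ 3 + c := by
      have hu := Finset.card_union_add_card_inter
        (univ.filter fun x : X => x ∈ S i ∧ ¬ P x)
        (univ.filter fun x : X => x ∈ S i ∧ ¬ Q x)
      have h3 : ((univ.filter fun x : X => x ∈ S i ∧ ¬ P x)
          ∪ (univ.filter fun x : X => x ∈ S i ∧ ¬ Q x)).card ≤ 3 := by
        rw [← hS i]
        apply Finset.card_le_card
        intro x hx
        rcases Finset.mem_union.mp hx with hx | hx <;>
          exact (Finset.mem_filter.mp hx).2.1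
      have hi : ((univ.filter fun x : X => x ∈ S i ∧ ¬ P x)
          ∩ (univ.filter fun x : X => x ∈ S i ∧ ¬ Q x)).card = c := by
        rw [hc]
        congr 1
        ext x
        simp only [Finset.mem_inter, Finset.mem_filter, Finset.mem_univ, true_and]
        tauto
      omega
    have hcd : c ≤ d := by
      apply Finset.card_le_card
      intro x hx
      simp only [Finset.mem_filter, Finset.mem_univ, true_and, not_or] at hx ⊢
      exact ⟨hx.2.1, hx.2.2⟩
    have hnp : n ≤ p := by rw [hp, ← Finset.card_univ]; exact Finset.card_filter_le _ _
    have hbS : (univ.filter (fun x : X => ¬ Q x) ∩ S i).card = b := by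
      rw [hb]
      congr 1
      ext x
      simp only [Finset.mem_inter, Finset.mem_filter, Finset.mem_univ, true_and]
      tauto
    rw [hbS]
    omega
  · rintro ⟨B, hB⟩
    set A : X ⊕ Fin 6 → Finset (Fin m ⊕ Fin 2) := fun v =>
      match v with
      | Sum.inl x => redTop S (Sum.inl x) ∪ (if x ∈ B then {Sum.inr 0} else {Sum.inr 1})
      | Sum.inr j => redTop S (Sum.inr j) with hAdef
    have hA : Is3VACompletion (redTop S) redMid A := by
      intro v
      cases v with
      | inl x =>
        constructor
        · exact Finset.subset_union_left
        · apply Finset.union_subset_union_right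
          rw [redMid]
          split <;> simp
      | inr j => exact ⟨subset_rfl, Finset.subset_union_left⟩
    have hP : ∀ x : X, Sum.inr 0 ∈ A (Sum.inl x) ↔ x ∈ B := by
      intro x
      by_cases hx : x ∈ B <;> simp [hAdef, redTop, hx]
    have hQ : ∀ x : X, Sum.inr 1 ∈ A (Sum.inl x) ↔ x ∉ B := by
      intro x
      by_cases hx : x ∈ B <;> simp [hAdef, redTop, hx]
    set p := Fintype.card X with hp
    have hscoreW : thieleScore wCC A {Sum.inr 0, Sum.inr 1} = (p : ℚ) + 3 := by
      rw [score_pair, fix_ww hA]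
      congr 2
      rw [hp, ← Finset.card_univ]
      congr 1
      rw [Finset.filter_true_of_mem]
      intro x _
      by_cases hx : x ∈ B
      · exact Or.inl ((hP x).mpr hx)
      · exact Or.inr ((hQ x).mpr hx)
    -- counts in the X part
    have hSB2 : ∀ i : Fin m, (S i \ B).card = 2 := by
      intro i
      have := Finset.card_sdiff_add_card_inter (S i) B
      rw [hS i, Finset.inter_comm, hB i] at this
      omega
    have key : ∀ a b : Fin m ⊕ Fin 2,
        thieleScore wCC A {a, b} ≤ thieleScore wCC A {Sum.inr 0, Sum.inr 1} := by
      have hXle : ∀ pred : X → Prop, ∀ h : DecidablePred pred,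
          ((univ.filter pred).card : ℚ) ≤ p := by
        intro pred h
        rw [hp, ← Finset.card_univ]
        exact_mod_cast Finset.card_filter_le _ _
      have hsw0 : ∀ i : Fin m, thieleScore wCC A {Sum.inl i, Sum.inr 0}
          ≤ thieleScore wCC A {Sum.inr 0, Sum.inr 1} := by
        intro i
        rw [score_pair, fix_sw0 hA, hscoreW]
        have hcompl : (univ.filter fun x : X =>
            ¬ (Sum.inl i ∈ A (Sum.inl x) ∨ Sum.inr 0 ∈ A (Sum.inl x))) = S i \ B := by
          ext x
          simp only [Finset.mem_filter, Finset.mem_univ, true_and, not_or,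
            comp_inl_mem hA, hP, Finset.mem_sdiff, not_not]
          try tauto
        have hsum := Finset.card_filter_add_card_filter_not
          (s := (univ : Finset X))
          (p := fun x : X => Sum.inl i ∈ A (Sum.inl x) ∨ Sum.inr 0 ∈ A (Sum.inl x))
        rw [hcompl, hSB2 i, Finset.card_univ, ← hp] at hsum
        have : ((univ.filter fun x : X =>
            Sum.inl i ∈ A (Sum.inl x) ∨ Sum.inr 0 ∈ A (Sum.inl x)).card : ℚ) = (p : ℚ) - 2 := by
          have : (univ.filter fun x : X =>
            Sum.inl i ∈ A (Sum.inl x) ∨ Sum.inr 0 ∈ A (Sum.inl x)).card = p - 2 := by omega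
          rw [this]
          have hp2 : 2 ≤ p := by omega
          push_cast [Nat.cast_sub hp2]
          ring
        rw [this]
        linarith
      have hsw1 : ∀ i : Fin m, thieleScore wCC A {Sum.inl i, Sum.inr 1}
          ≤ thieleScore wCC A {Sum.inr 0, Sum.inr 1} := by
        intro i
        rw [score_pair, fix_sw1 hA, hscoreW]
        have hcompl : (univ.filter fun x : X =>
            ¬ (Sum.inl i ∈ A (Sum.inl x) ∨ Sum.inr 1 ∈ A (Sum.inl x))) = S i ∩ B := by
          ext x
          simp only [Finset.mem_filter, Finset.mem_univ, true_and, not_or,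
            comp_inl_mem hA, hQ, Finset.mem_inter, not_not]
          try tauto
        have hsum := Finset.card_filter_add_card_filter_not
          (s := (univ : Finset X))
          (p := fun x : X => Sum.inl i ∈ A (Sum.inl x) ∨ Sum.inr 1 ∈ A (Sum.inl x))
        rw [hcompl, Finset.inter_comm, hB i, Finset.card_univ, ← hp] at hsum
        have : ((univ.filter fun x : X =>
            Sum.inl i ∈ A (Sum.inl x) ∨ Sum.inr 1 ∈ A (Sum.inl x)).card : ℚ) = (p : ℚ) - 1 := by
          have h1 : (univ.filter fun x : X =>
            Sum.inl i ∈ A (Sum.inl x) ∨ Sum.inr 1 ∈ A (Sum.inl x)).card = p - 1 := by omega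
          rw [h1]
          have hp1 : 1 ≤ p := by omega
          push_cast [Nat.cast_sub hp1]
          ring
        rw [this]
        linarith
      intro a b
      rcases a with i | c
      · rcases b with i' | c'
        · rw [score_pair, fix_ss hA, hscoreW]
          have := hXle (fun x : X => Sum.inl i ∈ A (Sum.inl x) ∨ Sum.inl i' ∈ A (Sum.inl x))
            (by infer_instance)
          linarith
        · rcases fin_two c' with rfl | rfl
          · exact hsw0 i
          · exact hsw1 i
      · rcases b with i' | c'
        · rw [Finset.pair_comm]
          rcases fin_two c with rfl | rfl
          · exact hsw0 i'
          · exact hsw1 i'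
        · rcases fin_two c with rfl | rfl <;> rcases fin_two c' with rfl | rfl
          · rw [score_pair, fix_w0w0 hA, hscoreW]
            have := hXle (fun x : X => Sum.inr 0 ∈ A (Sum.inl x) ∨ Sum.inr 0 ∈ A (Sum.inl x))
              (by infer_instance)
            linarith
          · exact le_refl _
          · rw [Finset.pair_comm]
          · rw [score_pair, fix_w1w1 hA, hscoreW]
            have := hXle (fun x : X => Sum.inr 1 ∈ A (Sum.inl x) ∨ Sum.inr 1 ∈ A (Sum.inl x))
              (by infer_instance)
            linarith
      -- done key
    refine ⟨A, hA, ?_, ?_⟩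
    · exact card_pair_two _ _ (by simp)
    · intro W' hW'
      obtain ⟨u, v, huv, rfl⟩ := Finset.card_eq_two.mp hW'
      exact key u v
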